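/- arXiv:1010.6081 — 9 statements merged into one kernel-verified Lean document; each statement's English description precedes it below -/
import Mathlib

section
/- Let M be an n×n matrix over a commutative ring with n ≥ 2, let E = det M, let D be the minor obtained by deleting the first two rows and first two columns, and let M_{ij} denote the minor obtained by deleting row i and column j. Then E·D = M_{11}·M_{22} − M_{12}·M_{21}. -/
open Matrix

private lemma dj_key {R : Type*} [CommRing R] (n : ℕ)
    (M : Matrix (Fin (n + 2)) (Fin (n + 2)) R) :
    M.det *
        ((M.submatrix (Fin.succAbove 0) (Fin.succAbove 0)).det *
            (M.submatrix (Fin.succAbove 1) (Fin.succAbove 1)).det -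
          (M.submatrix (Fin.succAbove 0) (Fin.succAbove 1)).det *
            (M.submatrix (Fin.succAbove 1) (Fin.succAbove 0)).det) =
      M.det * (M.det *
        (M.submatrix (fun i : Fin n => i.succ.succ) (fun j : Fin n => j.succ.succ)).det) := by
  classical
  set d := M.det with hd
  let e : Fin 2 ⊕ Fin n ≃ Fin (n + 2) :=
    finSumFinEquiv.trans (finCongr (by omega))
  have he0 : e (Sum.inl 0) = (0 : Fin (n + 2)) := by
    apply Fin.ext; simp [e]
  have he1 : e (Sum.inl 1) = (1 : Fin (n + 2)) := by
    apply Fin.ext; simp [e]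
  have her : ∀ j : Fin n, e (Sum.inr j) = j.succ.succ := by
    intro j; apply Fin.ext; simp [e]
  let A := M.adjugate
  let P : Matrix (Fin 2) (Fin 2) R := fun k l => A (e (Sum.inl k)) (e (Sum.inl l))
  let Q : Matrix (Fin n) (Fin 2) R := fun k l => A (e (Sum.inr k)) (e (Sum.inl l))
  let W : Matrix (Fin 2) (Fin 2) R := fun k l => M (e (Sum.inl k)) (e (Sum.inl l))
  let X : Matrix (Fin 2) (Fin n) R := fun k l => M (e (Sum.inl k)) (e (Sum.inr l))
  let Y : Matrix (Fin n) (Fin 2) R := fun k l => M (e (Sum.inr k)) (e (Sum.inl l))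
  let Z : Matrix (Fin n) (Fin n) R := fun k l => M (e (Sum.inr k)) (e (Sum.inr l))
  have hM' : M.submatrix e e = fromBlocks W X Y Z := by
    ext i j
    cases i <;> cases j <;> rfl
  have hMA : ∀ i j : Fin (n + 2), (∑ k, M i k * A k j) = d * (if i = j then 1 else 0) := by
    intro i j
    have := congrFun (congrFun (Matrix.mul_adjugate M) i) j
    simpa [Matrix.mul_apply, Matrix.one_apply, mul_comm, A, hd] using this
  have hsum : ∀ i j : Fin (n + 2),
      (∑ s : Fin 2 ⊕ Fin n, M i (e s) * A (e s) j) = d * (if i = j then 1 else 0) := by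
    intro i j
    rw [← hMA i j]
    exact Equiv.sum_comp e (fun k => M i k * A k j)
  have hWP : W * P + X * Q = d • (1 : Matrix (Fin 2) (Fin 2) R) := by
    ext k l
    have := hsum (e (Sum.inl k)) (e (Sum.inl l))
    rw [Fintype.sum_sum_type] at this
    rw [Matrix.add_apply, Matrix.mul_apply, Matrix.mul_apply]
    simpa [Matrix.mul_apply, Matrix.one_apply, W, P, X, Q,
      EmbeddingLike.apply_eq_iff_eq, Sum.inl.injEq] using this
  have hYP : Y * P + Z * Q = 0 := by
    ext k l
    have := hsum (e (Sum.inr k)) (e (Sum.inl l))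
    rw [Fintype.sum_sum_type] at this
    rw [Matrix.add_apply, Matrix.mul_apply, Matrix.mul_apply]
    simpa [Matrix.mul_apply, Y, P, Z, Q, EmbeddingLike.apply_eq_iff_eq] using this
  have hprod : M.submatrix e e * fromBlocks P 0 Q 1 =
      fromBlocks (d • 1) X 0 Z := by
    rw [hM', fromBlocks_multiply]
    congr 1 <;> simp [hWP, hYP]
  have hdetZ : Z.det =
      (M.submatrix (fun i : Fin n => i.succ.succ) (fun j : Fin n => j.succ.succ)).det := by
    congr 1
    ext i j
    simp [Z, her, Matrix.submatrix_apply]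
  have hdetP : P.det =
      (M.submatrix (Fin.succAbove 0) (Fin.succAbove 0)).det *
          (M.submatrix (Fin.succAbove 1) (Fin.succAbove 1)).det -
        (M.submatrix (Fin.succAbove 0) (Fin.succAbove 1)).det *
          (M.submatrix (Fin.succAbove 1) (Fin.succAbove 0)).det := by
    rw [det_fin_two]
    simp only [P, he0, he1]
    rw [show A = M.adjugate from rfl]
    rw [adjugate_fin_succ_eq_det_submatrix, adjugate_fin_succ_eq_det_submatrix,
      adjugate_fin_succ_eq_det_submatrix, adjugate_fin_succ_eq_det_submatrix]
    simp [Fin.val_zero, Fin.val_one]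
    ring
  have hmain : d * P.det = d * d * Z.det := by
    calc d * P.det = (M.submatrix e e).det * (fromBlocks P 0 Q 1).det := by
          rw [Matrix.det_submatrix_equiv_self, det_fromBlocks_zero₁₂, det_one, mul_one, ← hd]
      _ = (M.submatrix e e * fromBlocks P 0 Q 1).det := (det_mul _ _).symm
      _ = (fromBlocks (d • (1 : Matrix (Fin 2) (Fin 2) R)) X 0 Z).det := by rw [hprod]
      _ = d * d * Z.det := by
          rw [det_fromBlocks_zero₂₁, det_smul, det_one, Fintype.card_fin]
          ring
  rw [← hdetP, ← hdetZ, hmain]; ring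

/-- Desnanot–Jacobi identity specialized to the first two rows and columns. -/
theorem desnanot_jacobi {R : Type*} [CommRing R] (n : ℕ)
    (M : Matrix (Fin (n + 2)) (Fin (n + 2)) R) :
    M.det *
        (M.submatrix (fun i : Fin n => i.succ.succ) (fun j : Fin n => j.succ.succ)).det =
      (M.submatrix (Fin.succAbove 0) (Fin.succAbove 0)).det *
          (M.submatrix (Fin.succAbove 1) (Fin.succAbove 1)).det -
        (M.submatrix (Fin.succAbove 0) (Fin.succAbove 1)).det *
          (M.submatrix (Fin.succAbove 1) (Fin.succAbove 0)).det := by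
  classical
  -- generic matrix argument to cancel det
  let ι := Fin (n + 2)
  let S := MvPolynomial (ι × ι) ℤ
  let N : Matrix ι ι S := Matrix.mvPolynomialX ι ι ℤ
  have hN : N.det *
        (N.submatrix (fun i : Fin n => i.succ.succ) (fun j : Fin n => j.succ.succ)).det =
      (N.submatrix (Fin.succAbove 0) (Fin.succAbove 0)).det *
          (N.submatrix (Fin.succAbove 1) (Fin.succAbove 1)).det -
        (N.submatrix (Fin.succAbove 0) (Fin.succAbove 1)).det *
          (N.submatrix (Fin.succAbove 1) (Fin.succAbove 0)).det := by
    exact (mul_left_cancel₀ (Matrix.det_mvPolynomialX_ne_zero ι ℤ) (dj_key n N)).symm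
  let f : S →+* R := MvPolynomial.eval₂Hom (Int.castRingHom R) (fun p : ι × ι => M p.1 p.2)
  have hmap : N.map f = M := Matrix.mvPolynomialX_map_eval₂ _ M
  rw [← hmap]
  simp only [Matrix.submatrix_map]
  simp only [← RingHom.mapMatrix_apply]
  simp only [← RingHom.map_det, ← _root_.map_mul, ← map_sub]
  exact congrArg f hN
end

section
/- Let E = det(m_{ij}) be an n×n determinant over a field, let k < n, let F be the lower-right (n−k)×(n−k) principal minor of E, and for 1 ≤ i,j ≤ k let g_{ij} be the (n−k+1)×(n−k+1) minor of E obtained by bordering F with row i and column j (i.e. the minor on rows {i, k+1, …, n} and columns {j, k+1, …, n}). Then det(g_{ij})_{1≤i,j≤k} = F^{k−1} · E. -/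
open Matrix

namespace SylAux
open Polynomial


variable {R : Type*} [CommRing R]

def lhs (k m : ℕ) (M : Matrix (Fin (k + m)) (Fin (k + m)) R) : R :=
  Matrix.det (Matrix.of fun i j : Fin k =>
    Matrix.det (M.submatrix
      (Fin.cases (Fin.castAdd m i) (fun t => Fin.natAdd k t) : Fin (m + 1) → Fin (k + m))
      (Fin.cases (Fin.castAdd m j) (fun t => Fin.natAdd k t) : Fin (m + 1) → Fin (k + m))))

def rhs (k m : ℕ) (M : Matrix (Fin (k + m)) (Fin (k + m)) R) : R :=
  (M.submatrix (Fin.natAdd k) (Fin.natAdd k)).det ^ (k - 1) * M.det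

variable {S : Type*} [CommRing S]

lemma lhs_map (f : R →+* S) (k m : ℕ) (M : Matrix (Fin (k + m)) (Fin (k + m)) R) :
    f (lhs k m M) = lhs k m (M.map f) := by
  unfold lhs
  rw [RingHom.map_det, RingHom.mapMatrix_apply]
  congr 1
  ext i j
  simp only [Matrix.map_apply, Matrix.of_apply]
  rw [RingHom.map_det, RingHom.mapMatrix_apply, Matrix.submatrix_map]

lemma rhs_map (f : R →+* S) (k m : ℕ) (M : Matrix (Fin (k + m)) (Fin (k + m)) R) :
    f (rhs k m M) = rhs k m (M.map f) := by
  unfold rhs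
  rw [_root_.map_mul, map_pow, RingHom.map_det, RingHom.map_det, RingHom.mapMatrix_apply,
    RingHom.mapMatrix_apply, Matrix.submatrix_map]

def e (m : ℕ) : Fin 1 ⊕ Fin m ≃ Fin (m + 1) :=
  finSumFinEquiv.trans (finCongr (Nat.add_comm 1 m))

lemma e_inl (m : ℕ) (x : Fin 1) : e m (Sum.inl x) = 0 := by
  apply Fin.ext; simp [e, Fin.val_eq_zero x]

lemma e_inr (m : ℕ) (t : Fin m) : e m (Sum.inr t) = Fin.succ t := by
  apply Fin.ext; simp [e, Nat.add_comm]

lemma core (k m : ℕ) (hk : 0 < k) (M : Matrix (Fin (k + m)) (Fin (k + m)) R)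
    [inst : Invertible (M.submatrix (Fin.natAdd k) (Fin.natAdd k))] :
    lhs k m M = rhs k m M := by
  set P := M.submatrix (Fin.castAdd m) (Fin.castAdd m) with hP
  set Q := M.submatrix (Fin.castAdd m) (Fin.natAdd k) with hQ
  set Rm := M.submatrix (Fin.natAdd k) (Fin.castAdd m) with hRm
  set D := M.submatrix (Fin.natAdd k) (Fin.natAdd k) with hD
  haveI : Invertible D := inst
  have hM : M.det = (fromBlocks P Q Rm D).det := by
    rw [← Matrix.det_submatrix_equiv_self finSumFinEquiv M]
    congr 1
    ext (x | x) (y | y) <;> simp [fromBlocks, hP, hQ, hRm, hD]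
  have hg : ∀ i j : Fin k,
      Matrix.det (M.submatrix
        (Fin.cases (Fin.castAdd m i) (fun t => Fin.natAdd k t) : Fin (m + 1) → Fin (k + m))
        (Fin.cases (Fin.castAdd m j) (fun t => Fin.natAdd k t) : Fin (m + 1) → Fin (k + m)))
      = D.det * (P - Q * ⅟D * Rm) i j := by
    intro i j
    rw [← Matrix.det_submatrix_equiv_self (e m)]
    have hsub : ((M.submatrix
        (Fin.cases (Fin.castAdd m i) (fun t => Fin.natAdd k t) : Fin (m + 1) → Fin (k + m))
        (Fin.cases (Fin.castAdd m j) (fun t => Fin.natAdd k t) : Fin (m + 1) → Fin (k + m))).submatrix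
          (e m) (e m))
        = fromBlocks (Matrix.of fun _ _ : Fin 1 => M (Fin.castAdd m i) (Fin.castAdd m j))
            (Matrix.of fun (_ : Fin 1) t => M (Fin.castAdd m i) (Fin.natAdd k t))
            (Matrix.of fun t (_ : Fin 1) => M (Fin.natAdd k t) (Fin.castAdd m j)) D := by
      ext (x | x) (y | y) <;> simp [e_inl, e_inr, fromBlocks, hD]
    rw [hsub, Matrix.det_fromBlocks₂₂]
    congr 1
    rw [Matrix.det_fin_one]
    simp [Matrix.sub_apply, Matrix.mul_apply, hP, hQ, hRm]
  have key : (Matrix.of fun i j : Fin k =>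
      Matrix.det (M.submatrix
        (Fin.cases (Fin.castAdd m i) (fun t => Fin.natAdd k t) : Fin (m + 1) → Fin (k + m))
        (Fin.cases (Fin.castAdd m j) (fun t => Fin.natAdd k t) : Fin (m + 1) → Fin (k + m))))
      = D.det • (P - Q * ⅟D * Rm) := by
    ext i j
    simp [hg i j]
  unfold lhs rhs
  rw [key, Matrix.det_smul, hM, Matrix.det_fromBlocks₂₂, Fintype.card_fin, ← hD,
    show D.det ^ k = D.det ^ (k - 1) * D.det by rw [← pow_succ, Nat.sub_add_cancel hk]]
  ring

end SylAux

open Polynomial in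
/-- Sylvester's determinant identity (bordered minors form). The matrix has size
`n = k + m` with `0 < k` and `0 < m` (so that `k < n`). -/
theorem sylvester_identity {F : Type*} [Field F] (k m : ℕ) (hk : 0 < k) (hm : 0 < m)
    (M : Matrix (Fin (k + m)) (Fin (k + m)) F) :
    Matrix.det (Matrix.of fun i j : Fin k =>
        Matrix.det (M.submatrix
          (Fin.cases (Fin.castAdd m i) (fun t => Fin.natAdd k t) : Fin (m + 1) → Fin (k + m))
          (Fin.cases (Fin.castAdd m j) (fun t => Fin.natAdd k t) : Fin (m + 1) → Fin (k + m)))) =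
      (M.submatrix (Fin.natAdd k) (Fin.natAdd k)).det ^ (k - 1) * M.det := by
  show SylAux.lhs k m M = SylAux.rhs k m M
  classical
  -- perturb by X on the diagonal over F[X]
  set N : Matrix (Fin (k + m)) (Fin (k + m)) F[X] :=
    M.map Polynomial.C + (X : F[X]) • 1 with hN
  have hNev : N.map (Polynomial.evalRingHom (0 : F)) = M := by
    ext i j
    simp [hN, Matrix.map_apply, Matrix.add_apply, Matrix.smul_apply, Matrix.one_apply,
      apply_ite (Polynomial.evalRingHom (0 : F))]
    split <;> simp
  have hDblock : N.submatrix (Fin.natAdd k) (Fin.natAdd k) =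
      Matrix.scalar (Fin m) (X : F[X]) -
        ((-(M.submatrix (Fin.natAdd k) (Fin.natAdd k))).map Polynomial.C) := by
    ext i j
    simp [hN, Matrix.submatrix_apply, Matrix.add_apply, Matrix.smul_apply, Matrix.one_apply,
      Matrix.scalar_apply, Matrix.diagonal_apply, Fin.ext_iff, Nat.add_right_cancel_iff]
    split <;> ring
  have hdet0 : (N.submatrix (Fin.natAdd k) (Fin.natAdd k)).det ≠ 0 := by
    rw [hDblock]
    have : (Matrix.scalar (Fin m) (X : F[X]) -
        ((-(M.submatrix (Fin.natAdd k) (Fin.natAdd k))).map Polynomial.C)).det =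
        (-(M.submatrix (Fin.natAdd k) (Fin.natAdd k))).charpoly := rfl
    rw [this]
    exact (Matrix.charpoly_monic _).ne_zero
  -- pass to the fraction field
  set K := FractionRing F[X]
  set φ : F[X] →+* K := algebraMap F[X] K with hφ
  have hinj : Function.Injective φ := IsFractionRing.injective F[X] K
  have hdetK : ((N.map φ).submatrix (Fin.natAdd k) (Fin.natAdd k)).det ≠ 0 := by
    rw [Matrix.submatrix_map, ← RingHom.mapMatrix_apply, ← RingHom.map_det]
    intro h
    exact hdet0 (hinj (by simpa using h))
  haveI : Invertible ((N.map φ).submatrix (Fin.natAdd k) (Fin.natAdd k)) :=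
    Matrix.invertibleOfIsUnitDet _ (isUnit_iff_ne_zero.mpr hdetK)
  have hK := SylAux.core k m hk (N.map φ)
  have hPoly : SylAux.lhs k m N = SylAux.rhs k m N := by
    apply hinj
    rw [SylAux.lhs_map, SylAux.rhs_map, hK]
  have := congrArg (Polynomial.evalRingHom (0 : F)) hPoly
  rw [SylAux.lhs_map, SylAux.rhs_map, hNev] at this
  exact this
end

section
/- Let E be an n×n determinant over a field, let k ≥ 2, and let K be the leading principal k×k minor of the adjugate matrix (matrix of cofactors, transposed) of E. Let F be the lower-right (n−k)×(n−k) principal minor of E. Then K = F · E^{k−1}. -/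
open Matrix

private lemma jacobi_key {R : Type*} [CommRing R] (k m : ℕ)
    (M : Matrix (Fin (k + m)) (Fin (k + m)) R) :
    ((M.adjugate).submatrix (Fin.castAdd m) (Fin.castAdd m)).det * M.det =
      (M.submatrix (Fin.natAdd k) (Fin.natAdd k)).det * M.det ^ k := by
  set e : Fin k ⊕ Fin m ≃ Fin (k + m) := finSumFinEquiv with he
  set A : Matrix (Fin k ⊕ Fin m) (Fin k ⊕ Fin m) R := M.submatrix e e with hA
  set B : Matrix (Fin k ⊕ Fin m) (Fin k ⊕ Fin m) R := A.adjugate with hB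
  have hAB : A * B = A.det • 1 := mul_adjugate A
  have hAblocks : A = fromBlocks A.toBlocks₁₁ A.toBlocks₁₂ A.toBlocks₂₁ A.toBlocks₂₂ :=
    (fromBlocks_toBlocks A).symm
  have hBblocks : B = fromBlocks B.toBlocks₁₁ B.toBlocks₁₂ B.toBlocks₂₁ B.toBlocks₂₂ :=
    (fromBlocks_toBlocks B).symm
  have hsm : A.det • (1 : Matrix (Fin k ⊕ Fin m) (Fin k ⊕ Fin m) R) =
      fromBlocks (A.det • 1) 0 0 (A.det • 1) := by
    simp [← fromBlocks_one, fromBlocks_smul]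
  conv at hAB => lhs; rw [hAblocks, hBblocks, fromBlocks_multiply]
  rw [hsm] at hAB
  rw [fromBlocks_inj] at hAB
  obtain ⟨h11, -, h21, -⟩ := hAB
  -- The column-modified matrix
  set Cm : Matrix (Fin k ⊕ Fin m) (Fin k ⊕ Fin m) R :=
    fromBlocks B.toBlocks₁₁ 0 B.toBlocks₂₁ 1 with hCm
  have hprod : A * Cm = fromBlocks (A.det • 1) A.toBlocks₁₂ 0 A.toBlocks₂₂ := by
    rw [hAblocks, hCm, fromBlocks_multiply, h11, h21]
    simp [← hAblocks]
  have hdet : A.det * B.toBlocks₁₁.det = A.det ^ k * A.toBlocks₂₂.det := by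
    have := congrArg det hprod
    rw [det_mul, det_fromBlocks_zero₂₁, hCm, det_fromBlocks_zero₁₂, det_one, mul_one,
      det_smul, det_one, mul_one] at this
    simpa [Fintype.card_fin] using this
  -- translate back
  have hdetA : A.det = M.det := det_submatrix_equiv_self e M
  have hB11 : B.toBlocks₁₁ = (M.adjugate).submatrix (Fin.castAdd m) (Fin.castAdd m) := by
    rw [hB, hA, adjugate_submatrix_equiv_self]
    ext i j
    simp [toBlocks₁₁, he]
  have hA22 : A.toBlocks₂₂ = M.submatrix (Fin.natAdd k) (Fin.natAdd k) := by
    ext i j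
    simp [toBlocks₂₂, hA, he]
  rw [hdetA, hB11, hA22] at hdet
  linear_combination hdet

/-- Jacobi's theorem on minors of the adjugate: the leading principal `k × k` minor of the
adjugate of `M` equals the complementary lower-right `(n-k) × (n-k)` principal minor of `M`
times `(det M)^(k-1)`. Here the matrix has size `n = k + m`. -/
theorem jacobi_adjugate_minor {F : Type*} [Field F] (k m : ℕ) (hk : 2 ≤ k)
    (M : Matrix (Fin (k + m)) (Fin (k + m)) F) :
    ((M.adjugate).submatrix (Fin.castAdd m) (Fin.castAdd m)).det =
      (M.submatrix (Fin.natAdd k) (Fin.natAdd k)).det * M.det ^ (k - 1) := by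
  -- lift to polynomials
  set N : Matrix (Fin (k + m)) (Fin (k + m)) (Polynomial F) := charmatrix (-M) with hN
  have hdN : N.det ≠ 0 := by
    have : N.det = (-M).charpoly := rfl
    rw [this]
    exact ((-M).charpoly_monic).ne_zero
  have key := jacobi_key k m N
  have hkk : N.det ^ k = N.det ^ (k - 1) * N.det := by
    rw [← pow_succ]; congr 1; omega
  rw [hkk, ← mul_assoc] at key
  have hcancel : ((N.adjugate).submatrix (Fin.castAdd m) (Fin.castAdd m)).det =
      (N.submatrix (Fin.natAdd k) (Fin.natAdd k)).det * N.det ^ (k - 1) :=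
    mul_right_cancel₀ hdN key
  -- evaluate at 0
  set φ : Polynomial F →+* F := Polynomial.evalRingHom 0 with hφ
  have hNM : N.map φ = M := by
    ext i j
    by_cases h : i = j
    · subst h; simp [hN, charmatrix_apply_eq, hφ]
    · simp [hN, charmatrix_apply_ne _ _ _ h, hφ]
  have := congrArg φ hcancel
  simp only [_root_.map_mul, map_pow, RingHom.map_det, RingHom.mapMatrix_apply,
    ← submatrix_map, hNM] at this
  have hadj : N.adjugate.map ⇑φ = M.adjugate := by
    rw [← hNM]; simpa [RingHom.mapMatrix_apply] using φ.map_adjugate N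
  rw [hadj] at this
  exact this
end

section
/- Let n ≥ 1 and let (u_i, v_i, k_i; x_i, y_i, l_i), 1 ≤ i ≤ n+1, be elements of a field with all l_j − k_i nonzero, and write (u,v,k;x,y,l) for the (n+1)-st sextuple. Let D_{n+1} = det[(y_j u_i − x_j v_i)/(l_j − k_i)]_{1≤i,j≤n+1} and let D_n be its leading principal n×n minor, assumed nonzero. Define U_n = (1/D_n)·det of the (n+1)×(n+1) matrix whose (i,j) entry for j ≤ n is (y_j u_i − x_j v_i)/(l_j − k_i) (with row n+1 using (u,v,k) in place of (u_i,v_i,k_i)) and whose last column is (u_1,…,u_n,u)ᵀ; define V_n analogously with last column (v_1,…,v_n,v)ᵀ; define X_n = (1/D_n)·det of the (n+1)×(n+1) matrix whose (i,j) entry for i ≤ n is (y_j u_i − x_j v_i)/(l_j − k_i) (with column n+1 using (x,y,l) in place of (x_j,y_j,l_j)) and whose last row is (x_1,…,x_n,x); define Y_n analogously with last row (y_1,…,y_n,y). Then D_{n+1}/D_n = (Y_n·U_n − X_n·V_n)/(l − k). -/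
open Matrix Finset

lemma det_last_schur {F : Type*} [Field F] {n : ℕ} (M : Matrix (Fin (n+1)) (Fin (n+1)) F)
    (hB : IsUnit (M.submatrix Fin.castSucc Fin.castSucc).det) :
    M.det = (M.submatrix Fin.castSucc Fin.castSucc).det *
      (M (Fin.last n) (Fin.last n) -
        Matrix.vecMul (fun j => M (Fin.last n) j.castSucc)
          (M.submatrix Fin.castSucc Fin.castSucc)⁻¹ ⬝ᵥ (fun i => M i.castSucc (Fin.last n))) := by
  set B := M.submatrix Fin.castSucc Fin.castSucc with hBdef
  have : Invertible B := B.invertibleOfIsUnitDet hB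
  have he : M.submatrix (finSumFinEquiv (m := n) (n := 1)) (finSumFinEquiv (m := n) (n := 1))
      = fromBlocks B (Matrix.of fun i (_ : Fin 1) => M i.castSucc (Fin.last n))
                   (Matrix.of fun (_ : Fin 1) j => M (Fin.last n) j.castSucc)
                   (Matrix.of fun (_ _ : Fin 1) => M (Fin.last n) (Fin.last n)) := by
    ext i j
    have hlast : (finSumFinEquiv (m := n) (n := 1)) (Sum.inr 0) = Fin.last n := by
      simp [finSumFinEquiv, Fin.ext_iff]
    cases i with
    | inl i =>
      cases j with
      | inl j => simp [fromBlocks, Fin.castSucc, hBdef]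
      | inr j =>
        have : j = 0 := Subsingleton.elim _ _
        subst this
        simp [fromBlocks, hlast, Fin.castSucc]
    | inr i =>
      have : i = 0 := Subsingleton.elim _ _
      subst this
      cases j with
      | inl j => simp [fromBlocks, hlast, Fin.castSucc]
      | inr j =>
        have : j = 0 := Subsingleton.elim _ _
        subst this
        simp [fromBlocks, hlast]
  rw [← Matrix.det_submatrix_equiv_self (finSumFinEquiv (m := n) (n := 1)) M, he,
    Matrix.det_fromBlocks₁₁, Matrix.invOf_eq_nonsing_inv, Matrix.det_fin_one]
  congr 1

lemma key_aux {F : Type*} [Field F] {n : ℕ} (B : Matrix (Fin n) (Fin n) F)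
    (p w b c u' v' x' y' K L : Fin n → F) (uL vL xL yL kL lL d : F)
    (hBw : ∀ i, (∑ j, B i j * w j) = b i)
    (hpB : ∀ j, (∑ i, p i * B i j) = c j)
    (hdisp : ∀ i j, B i j * L j - K i * B i j = u' i * y' j - v' i * x' j)
    (hb : ∀ i, lL * b i - K i * b i = yL * u' i - xL * v' i)
    (hc : ∀ j, c j * L j - kL * c j = uL * y' j - vL * x' j)
    (hd : (lL - kL) * d = yL * uL - xL * vL) :
    (lL - kL) * (d - p ⬝ᵥ b) =
      (yL - y' ⬝ᵥ w) * (uL - p ⬝ᵥ u') - (xL - x' ⬝ᵥ w) * (vL - p ⬝ᵥ v') := by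
  have hcw : (∑ j, c j * w j) = p ⬝ᵥ b := by
    simp only [dotProduct]
    calc (∑ j, c j * w j) = ∑ j, ∑ i, p i * B i j * w j := by
          refine Finset.sum_congr rfl fun j _ => ?_
          rw [← hpB j, Finset.sum_mul]
      _ = ∑ i, ∑ j, p i * B i j * w j := Finset.sum_comm
      _ = ∑ i, p i * b i := by
          refine Finset.sum_congr rfl fun i _ => ?_
          rw [← hBw i, Finset.mul_sum]
          exact Finset.sum_congr rfl fun j _ => by ring
  have S3 : (∑ j, c j * (L j * w j)) - (∑ i, p i * (K i * b i)) =
      (p ⬝ᵥ u') * (y' ⬝ᵥ w) - (p ⬝ᵥ v') * (x' ⬝ᵥ w) := by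
    have e1 : (∑ j, c j * (L j * w j)) = ∑ i, ∑ j, p i * B i j * (L j * w j) := by
      rw [Finset.sum_comm]
      refine Finset.sum_congr rfl fun j _ => ?_
      rw [← hpB j, Finset.sum_mul]
    have e2 : (∑ i, p i * (K i * b i)) = ∑ i, ∑ j, p i * (K i * (B i j * w j)) := by
      refine Finset.sum_congr rfl fun i _ => ?_
      rw [← hBw i, Finset.mul_sum, Finset.mul_sum]
    rw [e1, e2, ← Finset.sum_sub_distrib]
    have e3 : ∀ i, (∑ j, p i * B i j * (L j * w j)) - (∑ j, p i * (K i * (B i j * w j)))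
        = ∑ j, p i * w j * (u' i * y' j - v' i * x' j) := by
      intro i
      rw [← Finset.sum_sub_distrib]
      refine Finset.sum_congr rfl fun j _ => ?_
      have := hdisp i j
      linear_combination p i * w j * this
    simp only [e3]
    have ex1 : (p ⬝ᵥ u') * (y' ⬝ᵥ w) = ∑ i, ∑ j, p i * w j * (u' i * y' j) := by
      simp only [dotProduct, Finset.sum_mul_sum]
      exact Finset.sum_congr rfl fun i _ => Finset.sum_congr rfl fun j _ => by ring
    have ex2 : (p ⬝ᵥ v') * (x' ⬝ᵥ w) = ∑ i, ∑ j, p i * w j * (v' i * x' j) := by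
      simp only [dotProduct, Finset.sum_mul_sum]
      exact Finset.sum_congr rfl fun i _ => Finset.sum_congr rfl fun j _ => by ring
    rw [ex1, ex2, ← Finset.sum_sub_distrib]
    refine Finset.sum_congr rfl fun i _ => ?_
    rw [← Finset.sum_sub_distrib]
    exact Finset.sum_congr rfl fun j _ => by ring
  have S1 : (∑ j, c j * (L j * w j)) =
      kL * (p ⬝ᵥ b) + uL * (y' ⬝ᵥ w) - vL * (x' ⬝ᵥ w) := by
    have : (∑ j, c j * (L j * w j)) =
        ∑ j, (kL * (c j * w j) + uL * (y' j * w j) - vL * (x' j * w j)) := by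
      refine Finset.sum_congr rfl fun j _ => ?_
      linear_combination w j * hc j
    rw [this]
    simp only [Finset.sum_add_distrib, Finset.sum_sub_distrib, ← Finset.mul_sum]
    rw [hcw]
    simp [dotProduct, mul_comm]
  have S2 : (∑ i, p i * (K i * b i)) =
      lL * (p ⬝ᵥ b) - yL * (p ⬝ᵥ u') + xL * (p ⬝ᵥ v') := by
    have : (∑ i, p i * (K i * b i)) =
        ∑ i, (lL * (p i * b i) - yL * (p i * u' i) + xL * (p i * v' i)) := by
      refine Finset.sum_congr rfl fun i _ => ?_
      linear_combination (-(p i)) * hb i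
    rw [this]
    simp only [Finset.sum_add_distrib, Finset.sum_sub_distrib, ← Finset.mul_sum]
    simp [dotProduct]
  linear_combination hd - S1 + S2 + S3

/-- Main theorem (reproducing determinant).  The six families `u v k x y l` are indexed by
`Fin (n+1)`, the last sextuple being `(u,v,k;x,y,l)` of the informal statement. -/
theorem reproducing_determinant {F : Type*} [Field F] (n : ℕ) (hn : 1 ≤ n)
    (u v k x y l : Fin (n + 1) → F) (hlk : ∀ i j, l j ≠ k i)
    (A : Matrix (Fin (n + 1)) (Fin (n + 1)) F)
    (hA : A = Matrix.of fun i j => (y j * u i - x j * v i) / (l j - k i))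
    (Dn : F) (hDn : Dn = (A.submatrix Fin.castSucc Fin.castSucc).det) (hDn0 : Dn ≠ 0)
    (Un Vn Xn Yn : F)
    (hU : Un = (1 / Dn) * Matrix.det (Matrix.of fun i j : Fin (n + 1) =>
      Fin.lastCases (u i)
        (fun j' => (y j'.castSucc * u i - x j'.castSucc * v i) / (l j'.castSucc - k i)) j))
    (hV : Vn = (1 / Dn) * Matrix.det (Matrix.of fun i j : Fin (n + 1) =>
      Fin.lastCases (v i)
        (fun j' => (y j'.castSucc * u i - x j'.castSucc * v i) / (l j'.castSucc - k i)) j))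
    (hX : Xn = (1 / Dn) * Matrix.det (Matrix.of fun i j : Fin (n + 1) =>
      Fin.lastCases (x j)
        (fun i' => (y j * u i'.castSucc - x j * v i'.castSucc) / (l j - k i'.castSucc)) i))
    (hY : Yn = (1 / Dn) * Matrix.det (Matrix.of fun i j : Fin (n + 1) =>
      Fin.lastCases (y j)
        (fun i' => (y j * u i'.castSucc - x j * v i'.castSucc) / (l j - k i'.castSucc)) i)) :
    A.det / Dn = (Yn * Un - Xn * Vn) / (l (Fin.last n) - k (Fin.last n)) := by
  have hlk' : ∀ (i j : Fin (n+1)), l j - k i ≠ 0 := fun i j => sub_ne_zero.mpr (hlk i j)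
  set B : Matrix (Fin n) (Fin n) F := A.submatrix Fin.castSucc Fin.castSucc with hBdef
  have hDnB : Dn = B.det := hDn
  have hBu : IsUnit B.det := isUnit_iff_ne_zero.mpr (hDnB ▸ hDn0)
  set b : Fin n → F := fun i => A i.castSucc (Fin.last n) with hbdef
  set c : Fin n → F := fun j => A (Fin.last n) j.castSucc with hcdef
  set p : Fin n → F := Matrix.vecMul c B⁻¹ with hpdef
  set w : Fin n → F := B⁻¹ *ᵥ b with hwdef
  have hInv : Invertible B := B.invertibleOfIsUnitDet hBu
  -- vector identities
  have hBw : ∀ i, (∑ j, B i j * w j) = b i := by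
    have : B *ᵥ w = b := by
      rw [hwdef, Matrix.mulVec_mulVec, Matrix.mul_nonsing_inv B hBu, Matrix.one_mulVec]
    intro i
    have := congrFun this i
    simpa [Matrix.mulVec, dotProduct] using this
  have hpB : ∀ j, (∑ i, p i * B i j) = c j := by
    have : Matrix.vecMul p B = c := by
      rw [hpdef, Matrix.vecMul_vecMul, Matrix.nonsing_inv_mul B hBu, Matrix.vecMul_one]
    intro j
    have := congrFun this j
    simpa [Matrix.vecMul, dotProduct] using this
  -- Schur complement formulas for all five determinants
  have hAdet : A.det = Dn * (A (Fin.last n) (Fin.last n) - p ⬝ᵥ b) := by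
    rw [hDnB, hpdef, hcdef, hbdef, hBdef]
    exact det_last_schur A hBu
  -- M_U
  have hMU : Matrix.det (Matrix.of fun i j : Fin (n + 1) =>
      Fin.lastCases (u i)
        (fun j' => (y j'.castSucc * u i - x j'.castSucc * v i) / (l j'.castSucc - k i)) j)
      = Dn * (u (Fin.last n) - p ⬝ᵥ (fun i => u i.castSucc)) := by
    set M : Matrix (Fin (n+1)) (Fin (n+1)) F := Matrix.of fun i j : Fin (n + 1) =>
      Fin.lastCases (u i)
        (fun j' => (y j'.castSucc * u i - x j'.castSucc * v i) / (l j'.castSucc - k i)) j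
      with hMdef
    have hsub : M.submatrix Fin.castSucc Fin.castSucc = B := by
      ext i j; simp [hMdef, hBdef, hA]
    have hrow : (fun j => M (Fin.last n) j.castSucc) = c := by
      funext j; simp [hMdef, hcdef, hA]
    have hcol : (fun i : Fin n => M i.castSucc (Fin.last n)) = (fun i : Fin n => u i.castSucc) := by
      funext i; simp [hMdef]
    have hd : M (Fin.last n) (Fin.last n) = u (Fin.last n) := by simp [hMdef]
    have := det_last_schur M (by rw [hsub]; exact hBu)
    rw [hsub, hrow, hcol, hd, ← hpdef, ← hDnB] at this
    exact this
  have hMV : Matrix.det (Matrix.of fun i j : Fin (n + 1) =>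
      Fin.lastCases (v i)
        (fun j' => (y j'.castSucc * u i - x j'.castSucc * v i) / (l j'.castSucc - k i)) j)
      = Dn * (v (Fin.last n) - p ⬝ᵥ (fun i => v i.castSucc)) := by
    set M : Matrix (Fin (n+1)) (Fin (n+1)) F := Matrix.of fun i j : Fin (n + 1) =>
      Fin.lastCases (v i)
        (fun j' => (y j'.castSucc * u i - x j'.castSucc * v i) / (l j'.castSucc - k i)) j
      with hMdef
    have hsub : M.submatrix Fin.castSucc Fin.castSucc = B := by
      ext i j; simp [hMdef, hBdef, hA]
    have hrow : (fun j => M (Fin.last n) j.castSucc) = c := by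
      funext j; simp [hMdef, hcdef, hA]
    have hcol : (fun i : Fin n => M i.castSucc (Fin.last n)) = (fun i : Fin n => v i.castSucc) := by
      funext i; simp [hMdef]
    have hd : M (Fin.last n) (Fin.last n) = v (Fin.last n) := by simp [hMdef]
    have := det_last_schur M (by rw [hsub]; exact hBu)
    rw [hsub, hrow, hcol, hd, ← hpdef, ← hDnB] at this
    exact this
  -- M_X
  have hMX : Matrix.det (Matrix.of fun i j : Fin (n + 1) =>
      Fin.lastCases (x j)
        (fun i' => (y j * u i'.castSucc - x j * v i'.castSucc) / (l j - k i'.castSucc)) i)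
      = Dn * (x (Fin.last n) - (fun j => x j.castSucc) ⬝ᵥ w) := by
    set M : Matrix (Fin (n+1)) (Fin (n+1)) F := Matrix.of fun i j : Fin (n + 1) =>
      Fin.lastCases (x j)
        (fun i' => (y j * u i'.castSucc - x j * v i'.castSucc) / (l j - k i'.castSucc)) i
      with hMdef
    have hsub : M.submatrix Fin.castSucc Fin.castSucc = B := by
      ext i j; simp [hMdef, hBdef, hA]
    have hrow : (fun j : Fin n => M (Fin.last n) j.castSucc) = (fun j : Fin n => x j.castSucc) := by
      funext j; simp [hMdef]
    have hcol : (fun i => M i.castSucc (Fin.last n)) = b := by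
      funext i; simp [hMdef, hbdef, hA]
    have hd : M (Fin.last n) (Fin.last n) = x (Fin.last n) := by simp [hMdef]
    have := det_last_schur M (by rw [hsub]; exact hBu)
    rw [hsub, hrow, hcol, hd, ← hDnB] at this
    rw [this, ← Matrix.dotProduct_mulVec, ← hwdef]
  have hMY : Matrix.det (Matrix.of fun i j : Fin (n + 1) =>
      Fin.lastCases (y j)
        (fun i' => (y j * u i'.castSucc - x j * v i'.castSucc) / (l j - k i'.castSucc)) i)
      = Dn * (y (Fin.last n) - (fun j => y j.castSucc) ⬝ᵥ w) := by
    set M : Matrix (Fin (n+1)) (Fin (n+1)) F := Matrix.of fun i j : Fin (n + 1) =>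
      Fin.lastCases (y j)
        (fun i' => (y j * u i'.castSucc - x j * v i'.castSucc) / (l j - k i'.castSucc)) i
      with hMdef
    have hsub : M.submatrix Fin.castSucc Fin.castSucc = B := by
      ext i j; simp [hMdef, hBdef, hA]
    have hrow : (fun j : Fin n => M (Fin.last n) j.castSucc) = (fun j : Fin n => y j.castSucc) := by
      funext j; simp [hMdef]
    have hcol : (fun i => M i.castSucc (Fin.last n)) = b := by
      funext i; simp [hMdef, hbdef, hA]
    have hd : M (Fin.last n) (Fin.last n) = y (Fin.last n) := by simp [hMdef]
    have := det_last_schur M (by rw [hsub]; exact hBu)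
    rw [hsub, hrow, hcol, hd, ← hDnB] at this
    rw [this, ← Matrix.dotProduct_mulVec, ← hwdef]
  -- the scalar values
  have hUval : Un = u (Fin.last n) - p ⬝ᵥ (fun i => u i.castSucc) := by
    rw [hU, hMU]; field_simp
  have hVval : Vn = v (Fin.last n) - p ⬝ᵥ (fun i => v i.castSucc) := by
    rw [hV, hMV]; field_simp
  have hXval : Xn = x (Fin.last n) - (fun j => x j.castSucc) ⬝ᵥ w := by
    rw [hX, hMX]; field_simp
  have hYval : Yn = y (Fin.last n) - (fun j => y j.castSucc) ⬝ᵥ w := by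
    rw [hY, hMY]; field_simp
  -- the key identity
  have hkey := key_aux B p w b c (fun i => u i.castSucc) (fun i => v i.castSucc)
    (fun j => x j.castSucc) (fun j => y j.castSucc)
    (fun i => k i.castSucc) (fun j => l j.castSucc)
    (u (Fin.last n)) (v (Fin.last n)) (x (Fin.last n)) (y (Fin.last n))
    (k (Fin.last n)) (l (Fin.last n)) (A (Fin.last n) (Fin.last n))
    hBw hpB
    (by
      intro i j
      have h0 := hlk' i.castSucc j.castSucc
      have hBij : B i j = (y j.castSucc * u i.castSucc - x j.castSucc * v i.castSucc) /
          (l j.castSucc - k i.castSucc) := by simp [hBdef, hA]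
      rw [hBij]; field_simp)
    (by
      intro i
      have h0 := hlk' i.castSucc (Fin.last n)
      have hbi : b i = (y (Fin.last n) * u i.castSucc - x (Fin.last n) * v i.castSucc) /
          (l (Fin.last n) - k i.castSucc) := by simp [hbdef, hA]
      rw [hbi]; field_simp)
    (by
      intro j
      have h0 := hlk' (Fin.last n) j.castSucc
      have hcj : c j = (y j.castSucc * u (Fin.last n) - x j.castSucc * v (Fin.last n)) /
          (l j.castSucc - k (Fin.last n)) := by simp [hcdef, hA]
      rw [hcj]; field_simp)
    (by
      have h0 := hlk' (Fin.last n) (Fin.last n)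
      have hAl : A (Fin.last n) (Fin.last n) =
          (y (Fin.last n) * u (Fin.last n) - x (Fin.last n) * v (Fin.last n)) /
          (l (Fin.last n) - k (Fin.last n)) := by simp [hA]
      rw [hAl]; field_simp)
  rw [hAdet, hUval, hVval, hXval, hYval, ← hkey]
  rw [mul_div_cancel_left₀ _ hDn0, mul_div_cancel_left₀ _ (hlk' (Fin.last n) (Fin.last n))]
end

section
/- Let u_i, v_i, k_i (1 ≤ i ≤ n) and u, v, k be field elements with all sums k_i + k_j, k + k_j, and 2k nonzero. Set x_i = u_i, y_i = −v_i, l_i = −k_i for 1 ≤ i ≤ n, and x = u, y = −v, l = −k. Then D_{n+1}/D_n = (1/k)·U_n·V_n, where D_{n+1} = det[(u_i v_j + u_j v_i)/(k_i + k_j)]_{1≤i,j≤n+1} (with (u_{n+1},v_{n+1},k_{n+1}) = (u,v,k)), D_n is its leading n×n minor, and U_n, V_n are as in the main theorem specialized to this data. -/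
open Matrix

/-- Factorization in the symmetric case `(x_i, y_i, l_i) = (u_i, -v_i, -k_i)` (including the
last triple): `D_{n+1}/D_n = (1/k) · U_n · V_n`. -/
theorem symmetric_factorization {F : Type*} [Field F] (n : ℕ)
    (u v k : Fin (n + 1) → F) (hsum : ∀ i j, k i + k j ≠ 0)
    (A : Matrix (Fin (n + 1)) (Fin (n + 1)) F)
    (hA : A = Matrix.of fun i j => (u i * v j + u j * v i) / (k i + k j))
    (Dn : F) (hDn : Dn = (A.submatrix Fin.castSucc Fin.castSucc).det) (hDn0 : Dn ≠ 0)
    (Un Vn : F)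
    (hU : Un = (1 / Dn) * Matrix.det (Matrix.of fun i j : Fin (n + 1) =>
      Fin.lastCases (u i)
        (fun j' => ((-v j'.castSucc) * u i - u j'.castSucc * v i) /
          ((-k j'.castSucc) - k i)) j))
    (hV : Vn = (1 / Dn) * Matrix.det (Matrix.of fun i j : Fin (n + 1) =>
      Fin.lastCases (v i)
        (fun j' => ((-v j'.castSucc) * u i - u j'.castSucc * v i) /
          ((-k j'.castSucc) - k i)) j)) :
    A.det / Dn = (1 / k (Fin.last n)) * Un * Vn := by
  have hk0 : k (Fin.last n) ≠ 0 := fun h => hsum (Fin.last n) (Fin.last n) (by rw [h, add_zero])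
  have h2 : (2 : F) ≠ 0 := fun h => hsum (Fin.last n) (Fin.last n) (by rw [← two_mul, h, zero_mul])
  -- symmetry of A
  have hAsym : Aᵀ = A := by
    ext i j
    simp only [hA, transpose_apply, of_apply]
    rw [add_comm (u j * v i), add_comm (k j)]
  -- the cofactor vector
  set c : Fin (n + 1) → F := A.adjugate (Fin.last n) with hc
  have hcN : c (Fin.last n) = Dn := by
    rw [hc, hDn, Matrix.adjugate_apply, Matrix.det_succ_row _ (Fin.last n)]
    rw [Finset.sum_eq_single (Fin.last n)]
    · have hsm : ((A.updateRow (Fin.last n) (Pi.single (Fin.last n) 1)).submatrix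
          Fin.castSucc Fin.castSucc) = A.submatrix Fin.castSucc Fin.castSucc := by
        ext i j
        rw [Matrix.submatrix_apply, Matrix.updateRow_ne (Fin.castSucc_lt_last i).ne,
          Matrix.submatrix_apply]
      simp only [Fin.succAbove_last, Matrix.updateRow_self, Pi.single_eq_same, hsm]
      ring_nf
      rw [Even.neg_one_pow ⟨Fin.last n, by ring⟩]
      ring
    · intro j _ hj
      simp [Pi.single_apply, hj.symm]
    · simp
  -- c ᵥ* A = det A • e and A *ᵥ c = det A • e
  have hcA : c ᵥ* A = A.det • (Pi.single (Fin.last n) 1 : Fin (n+1) → F) := by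
    funext j
    have hm := congrFun (congrFun (Matrix.adjugate_mul A) (Fin.last n)) j
    simp only [Matrix.mul_apply, Matrix.smul_apply, Matrix.one_apply] at hm
    simp only [Matrix.vecMul, dotProduct, hc]
    rw [hm]
    simp [Pi.single_apply, eq_comm, mul_ite, smul_eq_mul]
  have hAc : A *ᵥ c = A.det • (Pi.single (Fin.last n) 1 : Fin (n+1) → F) := by
    have h1 : A *ᵥ c = c ᵥ* A := by
      conv_lhs => rw [← hAsym]
      rw [Matrix.mulVec_transpose]
    rw [h1, hcA]
  -- displacement equation
  have hdisp : Matrix.diagonal k * A + A * Matrix.diagonal k = vecMulVec u v + vecMulVec v u := by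
    ext i j
    simp only [Matrix.add_apply, Matrix.diagonal_mul, Matrix.mul_diagonal,
      Matrix.vecMulVec_apply, hA, of_apply]
    field_simp [hsum i j]
  -- the U and V matrices are column updates of A
  have hUmat : (Matrix.of fun i j : Fin (n + 1) =>
      Fin.lastCases (u i)
        (fun j' => ((-v j'.castSucc) * u i - u j'.castSucc * v i) /
          ((-k j'.castSucc) - k i)) j) = A.updateCol (Fin.last n) u := by
    ext i j
    induction j using Fin.lastCases with
    | last => simp [Matrix.updateCol_apply]
    | cast j =>
      have hne : (Fin.castSucc j) ≠ Fin.last n := (Fin.castSucc_lt_last j).ne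
      rw [of_apply, Fin.lastCases_castSucc, Matrix.updateCol_apply, if_neg hne, hA, of_apply]
      rw [show (-v j.castSucc) * u i - u j.castSucc * v i
          = -(u i * v j.castSucc + u j.castSucc * v i) by ring,
        show (-k j.castSucc) - k i = -(k i + k j.castSucc) by ring, neg_div_neg_eq]
  have hVmat : (Matrix.of fun i j : Fin (n + 1) =>
      Fin.lastCases (v i)
        (fun j' => ((-v j'.castSucc) * u i - u j'.castSucc * v i) /
          ((-k j'.castSucc) - k i)) j) = A.updateCol (Fin.last n) v := by
    ext i j
    induction j using Fin.lastCases with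
    | last => simp [Matrix.updateCol_apply]
    | cast j =>
      have hne : (Fin.castSucc j) ≠ Fin.last n := (Fin.castSucc_lt_last j).ne
      rw [of_apply, Fin.lastCases_castSucc, Matrix.updateCol_apply, if_neg hne, hA, of_apply]
      rw [show (-v j.castSucc) * u i - u j.castSucc * v i
          = -(u i * v j.castSucc + u j.castSucc * v i) by ring,
        show (-k j.castSucc) - k i = -(k i + k j.castSucc) by ring, neg_div_neg_eq]
  -- column-replaced determinants as dot products with c
  have hUn : Un * Dn = c ⬝ᵥ u := by
    rw [hU, hUmat]
    have hd : (A.updateCol (Fin.last n) u).det = c ⬝ᵥ u := by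
      rw [← Matrix.cramer_apply, Matrix.cramer_eq_adjugate_mulVec]
      simp [Matrix.mulVec, hc]
    rw [hd]
    field_simp
  have hVn : Vn * Dn = c ⬝ᵥ v := by
    rw [hV, hVmat]
    have hd : (A.updateCol (Fin.last n) v).det = c ⬝ᵥ v := by
      rw [← Matrix.cramer_apply, Matrix.cramer_eq_adjugate_mulVec]
      simp [Matrix.mulVec, hc]
    rw [hd]
    field_simp
  -- the key double-sum identity, evaluated two ways
  have hS1 : c ⬝ᵥ ((Matrix.diagonal k * A + A * Matrix.diagonal k) *ᵥ c)
      = 2 * (A.det * (k (Fin.last n) * Dn)) := by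
    rw [Matrix.add_mulVec, dotProduct_add, ← Matrix.mulVec_mulVec, ← Matrix.mulVec_mulVec,
      hAc, Matrix.dotProduct_mulVec c A, hcA]
    have h1 : c ⬝ᵥ (Matrix.diagonal k *ᵥ (A.det • (Pi.single (Fin.last n) 1 : Fin (n+1) → F)))
        = A.det * (k (Fin.last n) * Dn) := by
      simp [dotProduct, Matrix.mulVec_diagonal, Pi.single_apply, mul_ite, ← hcN]
      ring
    have h2' : (A.det • (Pi.single (Fin.last n) 1 : Fin (n+1) → F)) ⬝ᵥ (Matrix.diagonal k *ᵥ c)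
        = A.det * (k (Fin.last n) * Dn) := by
      simp [dotProduct, Matrix.mulVec_diagonal, Pi.single_apply, ite_mul, ← hcN]
    rw [h1, h2']
    ring
  have hS2 : c ⬝ᵥ ((Matrix.diagonal k * A + A * Matrix.diagonal k) *ᵥ c)
      = 2 * ((c ⬝ᵥ u) * (c ⬝ᵥ v)) := by
    rw [hdisp, Matrix.add_mulVec, dotProduct_add]
    have hvmv : ∀ a b : Fin (n+1) → F, vecMulVec a b *ᵥ c = (b ⬝ᵥ c) • a := by
      intro a b
      funext i
      simp [Matrix.mulVec, Matrix.vecMulVec_apply, dotProduct, Finset.mul_sum, mul_assoc,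
        smul_eq_mul, mul_comm, mul_left_comm]
    rw [hvmv u v, hvmv v u, dotProduct_smul, dotProduct_smul,
      dotProduct_comm v c, dotProduct_comm u c]
    simp only [smul_eq_mul]
    ring
  have key : A.det * (k (Fin.last n) * Dn) = (c ⬝ᵥ u) * (c ⬝ᵥ v) :=
    mul_left_cancel₀ h2 (hS1.symm.trans hS2)
  rw [← hUn, ← hVn] at key
  field_simp
  apply mul_right_cancel₀ hDn0
  linear_combination key
end

section
/- With the symmetric specialization x_i = u_i, y_i = −v_i, l_i = −k_i (1 ≤ i ≤ n) fixed, the functions U_n and X_n of the main theorem, viewed as functions of a single triple of field elements, satisfy X_n(u, −v, −k) = U_n(u, v, k), and similarly Y_n(u, −v, −k) = −V_n(u, v, k), for all (u,v,k) with all k + k_j ≠ 0. -/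
open Matrix

/-- In the symmetric specialization `x_i = u_i, y_i = -v_i, l_i = -k_i` of the first `n`
sextuples, the bordered determinants satisfy `X_n(u,-v,-k) = U_n(u,v,k)` and
`Y_n(u,-v,-k) = -V_n(u,v,k)`. -/
theorem symmetric_UX_relations {F : Type*} [Field F] (n : ℕ)
    (u v k : Fin n → F) (hsum : ∀ i j : Fin n, k i + k j ≠ 0)
    (Dn : F)
    (hDn : Dn = Matrix.det (Matrix.of fun i j : Fin n => (u i * v j + u j * v i) / (k i + k j)))
    (hDn0 : Dn ≠ 0)
    (U V X Y : F → F → F → F)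
    (hU : ∀ a b c, U a b c = (1 / Dn) * Matrix.det (Matrix.of fun i j : Fin (n + 1) =>
      Fin.lastCases (motive := fun _ => F)
        (Fin.lastCases a (fun j' => ((-v j') * a - u j' * b) / ((-k j') - c)) j)
        (fun i' => Fin.lastCases (u i')
          (fun j' => ((-v j') * u i' - u j' * v i') / ((-k j') - k i')) j) i))
    (hV : ∀ a b c, V a b c = (1 / Dn) * Matrix.det (Matrix.of fun i j : Fin (n + 1) =>
      Fin.lastCases (motive := fun _ => F)
        (Fin.lastCases b (fun j' => ((-v j') * a - u j' * b) / ((-k j') - c)) j)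
        (fun i' => Fin.lastCases (v i')
          (fun j' => ((-v j') * u i' - u j' * v i') / ((-k j') - k i')) j) i))
    (hX : ∀ a b c, X a b c = (1 / Dn) * Matrix.det (Matrix.of fun i j : Fin (n + 1) =>
      Fin.lastCases (motive := fun _ => F)
        (Fin.lastCases a (fun j' => u j') j)
        (fun i' => Fin.lastCases ((b * u i' - a * v i') / (c - k i'))
          (fun j' => ((-v j') * u i' - u j' * v i') / ((-k j') - k i')) j) i))
    (hY : ∀ a b c, Y a b c = (1 / Dn) * Matrix.det (Matrix.of fun i j : Fin (n + 1) =>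
      Fin.lastCases (motive := fun _ => F)
        (Fin.lastCases b (fun j' => -v j') j)
        (fun i' => Fin.lastCases ((b * u i' - a * v i') / (c - k i'))
          (fun j' => ((-v j') * u i' - u j' * v i') / ((-k j') - k i')) j) i)) :
    ∀ a b c : F, (∀ j : Fin n, c + k j ≠ 0) →
      X a (-b) (-c) = U a b c ∧ Y a (-b) (-c) = -(V a b c) := by
  intro a b c _
  refine ⟨?_, ?_⟩
  · rw [hX, hU]
    congr 1
    rw [← Matrix.det_transpose (Matrix.of fun i j : Fin (n + 1) =>
      Fin.lastCases (motive := fun _ => F)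
        (Fin.lastCases a (fun j' => ((-v j') * a - u j' * b) / ((-k j') - c)) j)
        (fun i' => Fin.lastCases (u i')
          (fun j' => ((-v j') * u i' - u j' * v i') / ((-k j') - k i')) j) i)]
    congr 1
    ext i j
    simp only [Matrix.transpose_apply, Matrix.of_apply]
    induction i using Fin.lastCases with
    | last =>
      induction j using Fin.lastCases with
      | last => simp
      | cast j' => simp
    | cast i' =>
      induction j using Fin.lastCases with
      | last => simp; ring
      | cast j' => simp; ring
  · rw [hY, hV]
    have hdet : Matrix.det (Matrix.of fun i j : Fin (n + 1) =>
        Fin.lastCases (motive := fun _ => F)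
          (Fin.lastCases (-b) (fun j' => -v j') j)
          (fun i' => Fin.lastCases (((-b) * u i' - a * v i') / ((-c) - k i'))
            (fun j' => ((-v j') * u i' - u j' * v i') / ((-k j') - k i')) j) i) =
        Matrix.det (Matrix.diagonal (fun i : Fin (n + 1) => if i = Fin.last n then (-1 : F) else 1) *
          (Matrix.of fun i j : Fin (n + 1) =>
            Fin.lastCases (motive := fun _ => F)
              (Fin.lastCases b (fun j' => ((-v j') * a - u j' * b) / ((-k j') - c)) j)
              (fun i' => Fin.lastCases (v i')
                (fun j' => ((-v j') * u i' - u j' * v i') / ((-k j') - k i')) j) i)ᵀ) := by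
      congr 1
      ext i j
      rw [Matrix.diagonal_mul]
      simp only [Matrix.transpose_apply, Matrix.of_apply]
      induction i using Fin.lastCases with
      | last =>
        induction j using Fin.lastCases with
        | last => simp
        | cast j' => simp
      | cast i' =>
        induction j using Fin.lastCases with
        | last => simp [(Fin.castSucc_lt_last i').ne]; ring
        | cast j' => simp [(Fin.castSucc_lt_last i').ne]; ring
    rw [hdet, Matrix.det_mul, Matrix.det_diagonal, Matrix.det_transpose]
    have hprod : (∏ i : Fin (n + 1), if i = Fin.last n then (-1 : F) else 1) = -1 := by
      simp
    rw [hprod]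
    ring
end

section
/- Let u_1, v_1, k_1, u, v, k, x_1, y_1, l_1, x, y, l be field elements with l_1 ≠ k_1, l ≠ k_1, l_1 ≠ k, l ≠ k, and y_1 u_1 − x_1 v_1 ≠ 0. Then det of the 2×2 matrix [[(y_1u_1−x_1v_1)/(l_1−k_1), (yu_1−xv_1)/(l−k_1)], [(y_1u−x_1v)/(l_1−k), (yu−xv)/(l−k)]] divided by (y_1u_1−x_1v_1)/(l_1−k_1) equals (Y·U − X·V)/(l−k), where U = [(l_1−k_1)/(y_1u_1−x_1v_1)]·det[[( y_1u_1−x_1v_1)/(l_1−k_1), u_1],[(y_1u−x_1v)/(l_1−k), u]], V is the same with last column (v_1, v)ᵀ, X = [(l_1−k_1)/(y_1u_1−x_1v_1)]·det[[(y_1u_1−x_1v_1)/(l_1−k_1), (yu_1−xv_1)/(l−k_1)],[x_1, x]], and Y is the same with last row (y_1, y). -/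
open Matrix
set_option maxHeartbeats 2000000 in

/-- The `n = 1` case of the reproducing determinant theorem, fully explicit. -/
theorem reproducing_determinant_n1 {F : Type*} [Field F]
    (u₁ v₁ k₁ u v k x₁ y₁ l₁ x y l : F)
    (h1 : l₁ ≠ k₁) (h2 : l ≠ k₁) (h3 : l₁ ≠ k) (h4 : l ≠ k)
    (h5 : y₁ * u₁ - x₁ * v₁ ≠ 0)
    (U V X Y : F)
    (hU : U = (l₁ - k₁) / (y₁ * u₁ - x₁ * v₁) *
      Matrix.det !![(y₁ * u₁ - x₁ * v₁) / (l₁ - k₁), u₁;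
                    (y₁ * u - x₁ * v) / (l₁ - k), u])
    (hV : V = (l₁ - k₁) / (y₁ * u₁ - x₁ * v₁) *
      Matrix.det !![(y₁ * u₁ - x₁ * v₁) / (l₁ - k₁), v₁;
                    (y₁ * u - x₁ * v) / (l₁ - k), v])
    (hX : X = (l₁ - k₁) / (y₁ * u₁ - x₁ * v₁) *
      Matrix.det !![(y₁ * u₁ - x₁ * v₁) / (l₁ - k₁), (y * u₁ - x * v₁) / (l - k₁);
                    x₁, x])
    (hY : Y = (l₁ - k₁) / (y₁ * u₁ - x₁ * v₁) *
      Matrix.det !![(y₁ * u₁ - x₁ * v₁) / (l₁ - k₁), (y * u₁ - x * v₁) / (l - k₁);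
                    y₁, y]) :
    Matrix.det !![(y₁ * u₁ - x₁ * v₁) / (l₁ - k₁), (y * u₁ - x * v₁) / (l - k₁);
                  (y₁ * u - x₁ * v) / (l₁ - k), (y * u - x * v) / (l - k)] /
        ((y₁ * u₁ - x₁ * v₁) / (l₁ - k₁)) =
      (Y * U - X * V) / (l - k) := by
  have hk1 : l₁ - k₁ ≠ 0 := sub_ne_zero.mpr h1
  have hk2 : l - k₁ ≠ 0 := sub_ne_zero.mpr h2
  have hk3 : l₁ - k ≠ 0 := sub_ne_zero.mpr h3
  have hk4 : l - k ≠ 0 := sub_ne_zero.mpr h4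
  have hU' : U = (u * ((y₁ * u₁ - x₁ * v₁) * (l₁ - k)) -
      (l₁ - k₁) * (u₁ * (y₁ * u - x₁ * v))) / ((y₁ * u₁ - x₁ * v₁) * (l₁ - k)) := by
    rw [hU, Matrix.det_fin_two_of]
    field_simp
  have hV' : V = (v * ((y₁ * u₁ - x₁ * v₁) * (l₁ - k)) -
      (l₁ - k₁) * (v₁ * (y₁ * u - x₁ * v))) / ((y₁ * u₁ - x₁ * v₁) * (l₁ - k)) := by
    rw [hV, Matrix.det_fin_two_of]
    field_simp
  have hX' : X = (x * ((y₁ * u₁ - x₁ * v₁) * (l - k₁)) -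
      (l₁ - k₁) * (x₁ * (y * u₁ - x * v₁))) / ((y₁ * u₁ - x₁ * v₁) * (l - k₁)) := by
    rw [hX, Matrix.det_fin_two_of]
    field_simp
  have hY' : Y = (y * ((y₁ * u₁ - x₁ * v₁) * (l - k₁)) -
      (l₁ - k₁) * (y₁ * (y * u₁ - x * v₁))) / ((y₁ * u₁ - x₁ * v₁) * (l - k₁)) := by
    rw [hY, Matrix.det_fin_two_of]
    field_simp
  rw [Matrix.det_fin_two_of, hU', hV', hX', hY', div_div_eq_mul_div]
  field_simp
  ring
end

section
/- Let K be the (n+1)×(n+1) Vandermonde-type matrix with (i,j) entry k_j^{i−1} over a field, with the k_j pairwise distinct, let A(t) = ∏_{i=1}^{n+1}(t − k_i), and let L be the matrix with (i,j) entry l_j^{i−1}. Then K^{-1}·L = diag(1/A'(k_i)) · [1/(l_j − k_i)]_{i,j} · diag(A(l_j)), provided all l_j − k_i ≠ 0. -/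
open Matrix Polynomial

/-- Key lemma: the inverse of a Vandermonde matrix in the `k`-nodes times a Vandermonde
matrix in the `l`-nodes is a Cauchy matrix conjugated by diagonal matrices of values of
`A(t) = ∏ (t - k_i)` and its derivative. -/
theorem vandermonde_inv_mul_vandermonde {F : Type*} [Field F] (n : ℕ)
    (k l : Fin (n + 1) → F) (hk : Function.Injective k)
    (hlk : ∀ i j, l j ≠ k i)
    (A : Polynomial F) (hA : A = ∏ i : Fin (n + 1), (Polynomial.X - Polynomial.C (k i)))
    (K L : Matrix (Fin (n + 1)) (Fin (n + 1)) F)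
    (hK : K = Matrix.of fun (i j : Fin (n+1)) => k j ^ (i : ℕ))
    (hL : L = Matrix.of fun (i j : Fin (n+1)) => l j ^ (i : ℕ)) :
    K⁻¹ * L =
      Matrix.diagonal (fun i => ((Polynomial.derivative A).eval (k i))⁻¹) *
        (Matrix.of fun i j => (l j - k i)⁻¹) *
        Matrix.diagonal (fun j => A.eval (l j)) := by
  have hAnodal : A = Lagrange.nodal Finset.univ k := by
    rw [hA, Lagrange.nodal]
  have hinj : Set.InjOn k (Finset.univ : Finset (Fin (n+1))) := hk.injOn
  have hdet : IsUnit K.det := by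
    have hKT : K = (Matrix.vandermonde k)ᵀ := by
      subst hK; ext i j; simp [Matrix.vandermonde]
    rw [hKT, Matrix.det_transpose, Matrix.det_vandermonde]
    refine IsUnit.mk0 _ (Finset.prod_ne_zero_iff.mpr fun i _ =>
      Finset.prod_ne_zero_iff.mpr fun j hj => sub_ne_zero_of_ne fun h => ?_)
    exact absurd (hk h) (ne_of_gt (Finset.mem_Ioi.mp hj))
  haveI := K.invertibleOfIsUnitDet hdet
  rw [Matrix.inv_mul_eq_iff_eq_mul_of_invertible]
  ext i j
  rw [hL, hK]
  conv_rhs => rw [Matrix.mul_apply]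
  simp only [Matrix.diagonal_mul, Matrix.mul_diagonal, Matrix.of_apply]
  -- compute the sum via Lagrange interpolation of X^i at nodes k
  have hdeg : (X ^ (i : ℕ) : F[X]).degree < (Finset.univ : Finset (Fin (n+1))).card := by
    simp only [degree_X_pow, Finset.card_univ, Fintype.card_fin]
    exact_mod_cast Nat.lt_succ_of_le i.is_le
  have hint := Lagrange.eq_interpolate (f := (X ^ (i : ℕ) : F[X])) hinj hdeg
  have hx : ∀ m ∈ (Finset.univ : Finset (Fin (n+1))), l j ≠ k m := fun m _ => hlk m j
  have heval := Lagrange.eval_interpolate_not_at_node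
    (s := Finset.univ) (v := k) (fun m => eval (k m) (X ^ (i : ℕ))) (x := l j) hx
  rw [← hint] at heval
  simp only [eval_pow, eval_X] at heval
  rw [heval, ← hAnodal, Finset.mul_sum]
  refine Finset.sum_congr rfl fun m _ => ?_
  have hw : Lagrange.nodalWeight Finset.univ k m = (eval (k m) (derivative A))⁻¹ := by
    rw [Lagrange.nodalWeight_eq_eval_derivative_nodal (Finset.mem_univ m), hAnodal]
  rw [hw]
  ring
end

section
/- Let D_u, D_v, D_x, D_y be diagonal (n+1)×(n+1) matrices and K, L invertible (n+1)×(n+1) matrices over a field. Then the (2n+2)×(2n+2) block determinant det [[K·D_u, L·D_x],[K·D_v, L·D_y]] equals det(K)^2 · det(D_u·K^{-1}·L·D_y − D_v·K^{-1}·L·D_x). -/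
open Matrix Polynomial

/-- Schur-style block determinant when the left column blocks are diagonal and the top-left
block is invertible. -/
lemma det_fromBlocks_diag_of_invertible {α : Type*} [CommRing α] {m : Type*} [Fintype m]
    [DecidableEq m] (a c : m → α) (B D : Matrix m m α) [Invertible (diagonal a)] :
    (fromBlocks (diagonal a) B (diagonal c) D).det =
      (diagonal a * D - diagonal c * B).det := by
  rw [Matrix.det_fromBlocks₁₁, ← det_mul, Matrix.mul_sub]
  have hcomm : diagonal a * diagonal c = diagonal c * diagonal a := by
    have h : (fun i => a i * c i) = fun i => c i * a i := funext fun i => mul_comm _ _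
    rw [diagonal_mul_diagonal, diagonal_mul_diagonal, h]
  congr 2
  rw [← Matrix.mul_assoc, ← Matrix.mul_assoc, hcomm,
    Matrix.mul_assoc (diagonal c) (diagonal a), mul_invOf_self, Matrix.mul_one]

/-- Schur-style block determinant when the left column blocks are diagonal (no invertibility
needed), over a field: proved by a polynomial density argument. -/
lemma det_fromBlocks_diag {F : Type*} [Field F] {m : Type*} [Fintype m] [DecidableEq m]
    (a c : m → F) (B D : Matrix m m F) :
    (fromBlocks (diagonal a) B (diagonal c) D).det =
      (diagonal a * D - diagonal c * B).det := by
  classical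
  set R := Polynomial F
  set Kf := FractionRing R
  let g : R →+* Kf := algebraMap R Kf
  have hg : Function.Injective g := IsFractionRing.injective R Kf
  -- generic matrices over R
  let A0 : Matrix m m R := diagonal fun i => X + C (a i)
  let C0 : Matrix m m R := diagonal fun i => C (c i)
  let B0 : Matrix m m R := B.map C
  let D0 : Matrix m m R := D.map C
  -- the generic identity over R
  have key : (fromBlocks A0 B0 C0 D0).det = (A0 * D0 - C0 * B0).det := by
    apply hg
    have hdet : (A0.map g).det ≠ 0 := by
      rw [← RingHom.mapMatrix_apply, ← RingHom.map_det]
      rw [map_ne_zero_iff _ hg, det_diagonal]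
      exact Finset.prod_ne_zero_iff.2 fun i _ => (monic_X_add_C (a i)).ne_zero
    have hA : A0.map g = diagonal fun i => g (X + C (a i)) :=
      diagonal_map (map_zero g)
    haveI : Invertible (A0.map g) :=
      Matrix.invertibleOfIsUnitDet _ (isUnit_iff_ne_zero.2 hdet)
    haveI : Invertible (diagonal fun i => g (X + C (a i))) := hA ▸ ‹Invertible (A0.map g)›
    have main := det_fromBlocks_diag_of_invertible (fun i => g (X + C (a i)))
      (fun i => g (C (c i))) (B0.map g) (D0.map g)
    have h1 : g.mapMatrix (fromBlocks A0 B0 C0 D0) =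
        fromBlocks (A0.map g) (B0.map g) (C0.map g) (D0.map g) := by
      rw [RingHom.mapMatrix_apply, fromBlocks_map]
    have h2 : g.mapMatrix (A0 * D0 - C0 * B0) =
        A0.map g * D0.map g - C0.map g * B0.map g := by
      rw [map_sub, _root_.map_mul, _root_.map_mul]; rfl
    rw [RingHom.map_det, RingHom.map_det, h1, h2, hA,
      diagonal_map (map_zero g) (d := fun i => C (c i))]
    exact main
  -- evaluate at 0
  have this2 := congrArg (Polynomial.evalRingHom (0 : F)) key
  set e := Polynomial.evalRingHom (0 : F)
  have h1 : e.mapMatrix (fromBlocks A0 B0 C0 D0) =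
      fromBlocks (A0.map e) (B0.map e) (C0.map e) (D0.map e) := by
    rw [RingHom.mapMatrix_apply, fromBlocks_map]
  have h2 : e.mapMatrix (A0 * D0 - C0 * B0) =
      A0.map e * D0.map e - C0.map e * B0.map e := by
    rw [map_sub, _root_.map_mul, _root_.map_mul]; rfl
  rw [RingHom.map_det, RingHom.map_det, h1, h2] at this2
  have hA0 : A0.map e = diagonal a := by
    rw [diagonal_map (map_zero _)]
    have : (fun i => e (X + C (a i))) = a := by funext i; simp [e]
    rw [this]
  have hC0 : C0.map e = diagonal c := by
    rw [diagonal_map (map_zero _)]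
    have : (fun i => e (C (c i))) = c := by funext i; simp [e]
    rw [this]
  have hB0 : B0.map e = B := by ext i j; simp [B0, e]
  have hD0 : D0.map e = D := by ext i j; simp [D0, e]
  rwa [hA0, hB0, hC0, hD0] at this2

/-- Block determinant reduction: for invertible `K, L` and diagonal `D_u, D_v, D_x, D_y`,
`det [[K·D_u, L·D_x], [K·D_v, L·D_y]] = det(K)^2 · det(D_u K⁻¹ L D_y − D_v K⁻¹ L D_x)`. -/
theorem block_det_reduction {F : Type*} [Field F] (n : ℕ)
    (Du Dv Dx Dy : Fin (n + 1) → F)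
    (K L : Matrix (Fin (n + 1)) (Fin (n + 1)) F)
    (hK : IsUnit K.det) (hL : IsUnit L.det) :
    (Matrix.fromBlocks (K * Matrix.diagonal Du) (L * Matrix.diagonal Dx)
        (K * Matrix.diagonal Dv) (L * Matrix.diagonal Dy)).det =
      K.det ^ 2 *
        (Matrix.diagonal Du * K⁻¹ * L * Matrix.diagonal Dy -
          Matrix.diagonal Dv * K⁻¹ * L * Matrix.diagonal Dx).det := by
  have hKK : K * K⁻¹ = 1 := Matrix.mul_nonsing_inv K hK
  have hfact : Matrix.fromBlocks (K * Matrix.diagonal Du) (L * Matrix.diagonal Dx)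
      (K * Matrix.diagonal Dv) (L * Matrix.diagonal Dy) =
      Matrix.fromBlocks K 0 0 K *
        Matrix.fromBlocks (Matrix.diagonal Du) (K⁻¹ * (L * Matrix.diagonal Dx))
          (Matrix.diagonal Dv) (K⁻¹ * (L * Matrix.diagonal Dy)) := by
    rw [Matrix.fromBlocks_multiply]
    simp only [Matrix.zero_mul, Matrix.mul_zero, add_zero, zero_add,
      ← Matrix.mul_assoc, hKK, Matrix.one_mul]
  rw [hfact, det_mul, Matrix.det_fromBlocks_zero₁₂, det_fromBlocks_diag, ← sq]
  congr 2 <;> simp only [Matrix.mul_assoc]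
end
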